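/- Characterization of the feasible weights (Lemma on the set W): if the real family w = (w_t^k(q) : t,q ∈ {1,…,T}, k ∈ {1,…,K}) satisfies (i) w₁¹(q) = 1(D̂⁰ = q) for all q ∈ {1,…,T}; (ii) w_t^k(q) = θ_{t−1}^k(q)·w_{t−1}^k(q) for all t ∈ {2,…,T}, q ∈ {1,…,T}, k ∈ {1,…,K}; and (iii) w₁^k(q) = Σ_{p=1}^T (1 − θ_q^{k−1}(p))·w_q^{k−1}(p) for all q ∈ {1,…,T} and k ∈ {2,…,K}; then w_t^k(q) = P(D^k ≥ t, D^{k−1} = q) for all t,q ∈ {1,…,T} and k ∈ {1,…,K}. -/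

import Mathlib

open MeasureTheory Finset

/-- Characterization of the feasible weights: any family `w` satisfying the defining
constraints of the set `W` (built from the survival rates `θ`) coincides with the joint
probabilities `w_t^k(q) = P(D^k ≥ t, D^{k−1} = q)`. -/
theorem feasible_weights_characterization
    {Ω : Type*} [MeasurableSpace Ω] (Pr : Measure Ω) [IsProbabilityMeasure Pr]
    (K T : ℕ) (hK : 1 ≤ K) (hT : 1 ≤ T)
    (ε : ℝ) (hε : 0 < ε)
    (D0 : ℕ) (hD0 : D0 ∈ Finset.Icc 1 T)
    (D : ℕ → Ω → ℕ) (hDmeas : ∀ k, Measurable (D k))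
    (hD0as : ∀ᵐ ω ∂Pr, D 0 ω = D0)
    (hDrange : ∀ k ∈ Finset.Icc 1 K, ∀ᵐ ω ∂Pr, D k ω ∈ Finset.Icc 1 T)
    (hMarkov : ∀ d : ℕ → ℕ, d 0 = D0 → (∀ k ∈ Finset.Icc 1 K, d k ∈ Finset.Icc 1 T) →
      (Pr {ω | ∀ k ∈ Finset.Icc 1 K, D k ω = d k}).toReal =
        ∏ k ∈ Finset.Icc 1 K,
          (Pr {ω | D k ω = d k ∧ D (k - 1) ω = d (k - 1)}).toReal /
            (Pr {ω | D (k - 1) ω = d (k - 1)}).toReal)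
    (hLB : ∀ k < K, ∀ p ∈ Finset.Icc 1 T, ∀ q ∈ Finset.Icc 1 T,
      0 < Pr {ω | D k ω = q} →
      ε ≤ (Pr {ω | D (k + 1) ω = p ∧ D k ω = q}).toReal / (Pr {ω | D k ω = q}).toReal)
    (θ : ℕ → ℕ → ℕ → ℝ)
    (hθ : ∀ k ∈ Finset.Icc 1 K, ∀ t ∈ Finset.Icc 1 T, ∀ q ∈ Finset.Icc 1 T,
      θ k t q = (Pr {ω | t + 1 ≤ D k ω ∧ D (k - 1) ω = q}).toReal /
        (Pr {ω | t ≤ D k ω ∧ D (k - 1) ω = q}).toReal)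
    (w : ℕ → ℕ → ℕ → ℝ)
    (hw1 : ∀ q ∈ Finset.Icc 1 T, w 1 1 q = if D0 = q then (1 : ℝ) else 0)
    (hw2 : ∀ k ∈ Finset.Icc 1 K, ∀ t ∈ Finset.Icc 2 T, ∀ q ∈ Finset.Icc 1 T,
      w k t q = θ k (t - 1) q * w k (t - 1) q)
    (hw3 : ∀ k ∈ Finset.Icc 2 K, ∀ q ∈ Finset.Icc 1 T,
      w k 1 q = ∑ p ∈ Finset.Icc 1 T, (1 - θ (k - 1) q p) * w (k - 1) q p) :
    ∀ k ∈ Finset.Icc 1 K, ∀ t ∈ Finset.Icc 1 T, ∀ q ∈ Finset.Icc 1 T,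
      w k t q = (Pr {ω | t ≤ D k ω ∧ D (k - 1) ω = q}).toReal := by
  classical
  set P : ℕ → ℕ → ℕ → ℝ :=
    fun k t q => (Pr {ω | t ≤ D k ω ∧ D (k - 1) ω = q}).toReal with hPdef
  -- measurability of basic sets
  have hmeasA : ∀ k t q, MeasurableSet {ω | t ≤ D k ω ∧ D (k - 1) ω = q} := by
    intro k t q
    have : {ω | t ≤ D k ω ∧ D (k - 1) ω = q}
        = (D k) ⁻¹' (Set.Ici t) ∩ (D (k - 1)) ⁻¹' {q} := rfl
    rw [this]
    exact (hDmeas k measurableSet_Ici).inter (hDmeas (k - 1) (measurableSet_singleton q))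
  have hmeasB : ∀ k t q, MeasurableSet {ω | D k ω = t ∧ D (k - 1) ω = q} := by
    intro k t q
    have : {ω | D k ω = t ∧ D (k - 1) ω = q}
        = (D k) ⁻¹' {t} ∩ (D (k - 1)) ⁻¹' {q} := rfl
    rw [this]
    exact (hDmeas k (measurableSet_singleton t)).inter
      (hDmeas (k - 1) (measurableSet_singleton q))
  -- all values of D in the relevant range lie in Icc 1 T a.s.
  have hDval : ∀ j, j ≤ K → ∀ᵐ ω ∂Pr, D j ω ∈ Finset.Icc 1 T := by
    intro j hj
    rcases Nat.eq_zero_or_pos j with rfl | hj1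
    · filter_upwards [hD0as] with ω h
      rw [h]; exact hD0
    · exact hDrange j (Finset.mem_Icc.mpr ⟨hj1, hj⟩)
  -- split identity : P k t q = Pr{D k = t, D (k-1) = q} + P k (t+1) q
  have hsplit : ∀ k t q,
      P k t q = (Pr {ω | D k ω = t ∧ D (k - 1) ω = q}).toReal + P k (t + 1) q := by
    intro k t q
    have hset : {ω | t ≤ D k ω ∧ D (k - 1) ω = q}
        = {ω | D k ω = t ∧ D (k - 1) ω = q} ∪ {ω | t + 1 ≤ D k ω ∧ D (k - 1) ω = q} := by
      ext ω
      simp only [Set.mem_setOf_eq, Set.mem_union]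
      omega
    have hdisj : Disjoint {ω | D k ω = t ∧ D (k - 1) ω = q}
        {ω | t + 1 ≤ D k ω ∧ D (k - 1) ω = q} := by
      rw [Set.disjoint_left]
      rintro ω ⟨h1, _⟩ ⟨h2, _⟩
      omega
    simp only [hPdef]
    rw [hset, measure_union hdisj (hmeasA k (t + 1) q),
      ENNReal.toReal_add (measure_ne_top Pr _) (measure_ne_top Pr _)]
  -- θ multiplication identity
  have hθmul : ∀ k ∈ Finset.Icc 1 K, ∀ t ∈ Finset.Icc 1 T, ∀ q ∈ Finset.Icc 1 T,
      θ k t q * P k t q = P k (t + 1) q := by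
    intro k hk t ht q hq
    rw [hθ k hk t ht q hq]
    by_cases h0 : P k t q = 0
    · have hden : Pr {ω | t ≤ D k ω ∧ D (k - 1) ω = q} = 0 := by
        have := h0
        simp only [hPdef] at this
        exact (ENNReal.toReal_eq_zero_iff _).mp this |>.resolve_right (measure_ne_top Pr _)
      have hnum : Pr {ω | t + 1 ≤ D k ω ∧ D (k - 1) ω = q} = 0 := by
        refine le_antisymm (le_trans (measure_mono ?_) hden.le) (zero_le)
        rintro ω ⟨h1, h2⟩
        exact ⟨by omega, h2⟩
      simp only [hPdef, h0, hnum, ENNReal.toReal_zero, zero_div, zero_mul]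
    · rw [hPdef] at h0 ⊢
      exact div_mul_cancel₀ _ h0
  -- base case : P 1 1 q
  have hbase : ∀ q ∈ Finset.Icc 1 T, P 1 1 q = if D0 = q then (1 : ℝ) else 0 := by
    intro q hq
    have hD1 : ∀ᵐ ω ∂Pr, D 1 ω ∈ Finset.Icc 1 T := hDval 1 hK
    by_cases hq' : D0 = q
    · have hae : {ω | 1 ≤ D 1 ω ∧ D (1 - 1) ω = q} =ᵐ[Pr] (Set.univ : Set Ω) := by
        rw [Filter.eventuallyEq_set]
        filter_upwards [hD0as, hD1] with ω h0 h1
        simp only [Set.mem_setOf_eq, Set.mem_univ, iff_true]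
        exact ⟨(Finset.mem_Icc.mp h1).1, by simpa [h0] using hq'⟩
      simp only [hPdef, if_pos hq', measure_congr hae, measure_univ, ENNReal.toReal_one]
    · have hae : {ω | 1 ≤ D 1 ω ∧ D (1 - 1) ω = q} =ᵐ[Pr] (∅ : Set Ω) := by
        rw [Filter.eventuallyEq_set]
        filter_upwards [hD0as] with ω h0
        simp only [Set.mem_setOf_eq, Set.mem_empty_iff_false, iff_false, not_and]
        intro _
        simpa [h0] using hq'
      simp only [hPdef, if_neg hq', measure_congr hae, measure_empty, ENNReal.toReal_zero]
  -- marginal identity for the k-step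
  have hmarg : ∀ k, 1 ≤ k → k + 1 ≤ K → ∀ q ∈ Finset.Icc 1 T,
      P (k + 1) 1 q = ∑ p ∈ Finset.Icc 1 T,
        (Pr {ω | D k ω = q ∧ D (k - 1) ω = p}).toReal := by
    intro k hk1 hk2 q hq
    have hDk1 : ∀ᵐ ω ∂Pr, D (k + 1) ω ∈ Finset.Icc 1 T :=
      hDval (k + 1) hk2
    have hDkm1 : ∀ᵐ ω ∂Pr, D (k - 1) ω ∈ Finset.Icc 1 T :=
      hDval (k - 1) (by omega)
    have hae : {ω | 1 ≤ D (k + 1) ω ∧ D (k + 1 - 1) ω = q}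
        =ᵐ[Pr] ⋃ p ∈ Finset.Icc 1 T, {ω | D k ω = q ∧ D (k - 1) ω = p} := by
      rw [Filter.eventuallyEq_set]
      filter_upwards [hDk1, hDkm1] with ω h1 h2
      simp only [Set.mem_setOf_eq, Set.mem_iUnion, exists_prop, Nat.add_sub_cancel]
      constructor
      · rintro ⟨-, hq'⟩
        exact ⟨D (k - 1) ω, h2, hq', rfl⟩
      · rintro ⟨p, hp, hq', hp'⟩
        exact ⟨(Finset.mem_Icc.mp h1).1, hq'⟩
    have hdisj : (↑(Finset.Icc 1 T : Finset ℕ) : Set ℕ).PairwiseDisjoint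
        (fun p => {ω | D k ω = q ∧ D (k - 1) ω = p}) := by
      intro p hp p' hp' hne
      rw [Function.onFun, Set.disjoint_left]
      rintro ω ⟨_, h1⟩ ⟨_, h2⟩
      exact hne (h1 ▸ h2 ▸ rfl)
    simp only [hPdef]
    rw [measure_congr hae, measure_biUnion_finset hdisj (fun p _ => hmeasB k q p),
      ENNReal.toReal_sum (fun p _ => measure_ne_top Pr _)]
  -- the t-induction engine
  have key : ∀ k ∈ Finset.Icc 1 K, (∀ q ∈ Finset.Icc 1 T, w k 1 q = P k 1 q) →
      ∀ t ∈ Finset.Icc 1 T, ∀ q ∈ Finset.Icc 1 T, w k t q = P k t q := by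
    intro k hk hbase1 t ht
    obtain ⟨ht1, ht2⟩ := Finset.mem_Icc.mp ht
    clear ht
    induction t, ht1 using Nat.le_induction with
    | base => exact hbase1
    | succ n hn ih =>
      intro q hq
      rw [hw2 k hk (n + 1) (Finset.mem_Icc.mpr ⟨by omega, ht2⟩) q hq]
      simp only [Nat.add_sub_cancel]
      rw [ih (by omega) q hq]
      exact hθmul k hk n (Finset.mem_Icc.mpr ⟨hn, by omega⟩) q hq
  -- main induction on k
  intro k hk
  obtain ⟨hk1, hk2⟩ := Finset.mem_Icc.mp hk
  clear hk
  induction k, hk1 using Nat.le_induction with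
  | base =>
    refine key 1 (Finset.mem_Icc.mpr ⟨le_refl 1, hK⟩) ?_
    intro q hq
    rw [hw1 q hq, hbase q hq]
  | succ k hk ih =>
    have hkK : k ≤ K := by omega
    have hkmem : k ∈ Finset.Icc 1 K := Finset.mem_Icc.mpr ⟨hk, hkK⟩
    refine key (k + 1) (Finset.mem_Icc.mpr ⟨by omega, hk2⟩) ?_
    intro q hq
    rw [hw3 (k + 1) (Finset.mem_Icc.mpr ⟨by omega, hk2⟩) q hq]
    simp only [Nat.add_sub_cancel]
    rw [hmarg k hk hk2 q hq]
    refine Finset.sum_congr rfl ?_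
    intro p hp
    rw [ih hkK q hq p hp, sub_mul, one_mul, hθmul k hkmem q hq p hp]
    have hs := hsplit k q p
    simp only [hPdef] at hs ⊢
    linarith
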